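/- If Z is finite, then the infinite-horizon safe set { z : lim_T V_T(z) ≥ 0 } (equivalently { z : V_T(z) ≥ 0 for all T }, since V_T is non-increasing in T) equals the maximal safe set Ω* defined by the existence of a policy avoiding F = { z : ℓ(z) < 0 } forever against all admissible adversary sequences. -/

import Mathlib

/-- Finite-horizon safety value:
`V 0 z = ℓ z`, `V (T+1) z = max_a min_{b ∈ Badm z} min (ℓ z) (V T (f z a b))`. -/
noncomputable def V {Z A B : Type*} [Fintype A] [Nonempty A]
    (f : Z → A → B → Z) (Badm : Z → Finset B) (hB : ∀ z, (Badm z).Nonempty)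
    (ℓ : Z → ℝ) : ℕ → Z → ℝ
  | 0, z => ℓ z
  | T + 1, z =>
    Finset.univ.sup' Finset.univ_nonempty fun a : A =>
      (Badm z).inf' (hB z) fun b => min (ℓ z) (V f Badm hB ℓ T (f z a b))

/-- Closed-loop trajectory under policy `π` and adversary sequence `b`. -/
def traj {Z A B : Type*} (f : Z → A → B → Z) (π : Z → A) (b : ℕ → B) (z0 : Z) : ℕ → Z
  | 0 => z0
  | t + 1 => f (traj f π b z0 t) (π (traj f π b z0 t)) (b t)

/-- The maximal safe set Ω* for failure set `{z | ℓ z < 0}`. -/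
def SafeSet {Z A B : Type*} (f : Z → A → B → Z) (Badm : Z → Finset B) (F : Set Z) : Set Z :=
  {z0 | ∃ π : Z → A, ∀ b : ℕ → B,
    (∀ t, b t ∈ Badm (traj f π b z0 t)) → ∀ t, traj f π b z0 t ∉ F}

section
variable {Z A B : Type*} [Fintype A] [Nonempty A]

lemma V_zero (f : Z → A → B → Z) (Badm : Z → Finset B) (hB : ∀ z, (Badm z).Nonempty)
    (ℓ : Z → ℝ) (z : Z) : V f Badm hB ℓ 0 z = ℓ z := rfl

lemma V_succ (f : Z → A → B → Z) (Badm : Z → Finset B) (hB : ∀ z, (Badm z).Nonempty)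
    (ℓ : Z → ℝ) (T : ℕ) (z : Z) : V f Badm hB ℓ (T+1) z =
    Finset.univ.sup' Finset.univ_nonempty fun a : A =>
      (Badm z).inf' (hB z) fun b => min (ℓ z) (V f Badm hB ℓ T (f z a b)) := rfl

lemma V_succ_le (f : Z → A → B → Z) (Badm : Z → Finset B) (hB : ∀ z, (Badm z).Nonempty)
    (ℓ : Z → ℝ) : ∀ T (z : Z), V f Badm hB ℓ (T+1) z ≤ V f Badm hB ℓ T z := by
  intro T
  induction T with
  | zero =>
    intro z
    rw [V_succ, V_zero]
    apply Finset.sup'_le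
    intro a _
    obtain ⟨b, hb⟩ := hB z
    exact le_trans (Finset.inf'_le _ hb) (min_le_left _ _)
  | succ T ih =>
    intro z
    rw [V_succ, V_succ]
    apply Finset.sup'_le
    intro a ha
    refine le_trans ?_ (Finset.le_sup' _ ha)
    apply Finset.le_inf'
    intro b hb
    exact le_trans (Finset.inf'_le _ hb) (min_le_min le_rfl (ih _))

lemma V_anti (f : Z → A → B → Z) (Badm : Z → Finset B) (hB : ∀ z, (Badm z).Nonempty)
    (ℓ : Z → ℝ) {T T' : ℕ} (h : T ≤ T') (z : Z) :
    V f Badm hB ℓ T' z ≤ V f Badm hB ℓ T z := by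
  have h' : Antitone fun n => V f Badm hB ℓ n z :=
    antitone_nat_of_succ_le fun n => V_succ_le f Badm hB ℓ n z
  exact h' h

/-- There always exists an admissible adversary sequence. -/
lemma exists_adm (f : Z → A → B → Z) (Badm : Z → Finset B) (hB : ∀ z, (Badm z).Nonempty)
    (π : Z → A) (z : Z) :
    ∃ b : ℕ → B, ∀ t, b t ∈ Badm (traj f π b z t) := by
  classical
  let g : ℕ → Z := fun t => Nat.rec z (fun _ zt => f zt (π zt) ((hB zt).choose)) t
  refine ⟨fun t => (hB (g t)).choose, ?_⟩
  have key : ∀ t, traj f π (fun t => (hB (g t)).choose) z t = g t := by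
    intro t
    induction t with
    | zero => rfl
    | succ t ih => simp only [traj, ih]; rfl
  intro t
  rw [key t]
  exact (hB (g t)).choose_spec

/-- Shifting a safe trajectory one step keeps it safe. -/
lemma safe_shift (f : Z → A → B → Z) (Badm : Z → Finset B) (ℓ : Z → ℝ)
    (π : Z → A) (z : Z)
    (hsafe : ∀ b : ℕ → B, (∀ t, b t ∈ Badm (traj f π b z t)) →
      ∀ t, 0 ≤ ℓ (traj f π b z t))
    (b0 : B) (hb0 : b0 ∈ Badm z) :
    ∀ b : ℕ → B, (∀ t, b t ∈ Badm (traj f π b (f z (π z) b0) t)) →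
      ∀ t, 0 ≤ ℓ (traj f π b (f z (π z) b0) t) := by
  intro b' hadm t
  set z' := f z (π z) b0 with hz'
  let b : ℕ → B := fun n => Nat.casesOn n b0 b'
  have key : ∀ t, traj f π b z (t + 1) = traj f π b' z' t := by
    intro t
    induction t with
    | zero => rfl
    | succ t ih =>
      show f (traj f π b z (t+1)) (π (traj f π b z (t+1))) (b (t+1)) = _
      rw [ih]
      rfl
  have hadm' : ∀ t, b t ∈ Badm (traj f π b z t) := by
    intro t
    cases t with
    | zero => exact hb0
    | succ t => rw [key t]; exact hadm t
  have := hsafe b hadm' (t + 1)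
  rwa [key t] at this

lemma safe_imp_V (f : Z → A → B → Z) (Badm : Z → Finset B) (hB : ∀ z, (Badm z).Nonempty)
    (ℓ : Z → ℝ) (T : ℕ) : ∀ (z : Z) (π : Z → A),
    (∀ b : ℕ → B, (∀ t, b t ∈ Badm (traj f π b z t)) →
      ∀ t, 0 ≤ ℓ (traj f π b z t)) →
    0 ≤ V f Badm hB ℓ T z := by
  induction T with
  | zero =>
    intro z π hsafe
    obtain ⟨b, hb⟩ := exists_adm f Badm hB π z
    exact hsafe b hb 0
  | succ T ih =>
    intro z π hsafe
    rw [V_succ, Finset.le_sup'_iff]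
    refine ⟨π z, Finset.mem_univ _, Finset.le_inf' _ _ fun b hb => le_min ?_ ?_⟩
    · obtain ⟨b', hb'⟩ := exists_adm f Badm hB π z
      exact hsafe b' hb' 0
    · exact ih _ π (safe_shift f Badm ℓ π z hsafe b hb)

/-- From a state where all `V T` are nonnegative, there is a single action
keeping all `V T` nonnegative. -/
lemma exists_good_action (f : Z → A → B → Z) (Badm : Z → Finset B)
    (hB : ∀ z, (Badm z).Nonempty) (ℓ : Z → ℝ)
    (z : Z) (hz : ∀ T, 0 ≤ V f Badm hB ℓ T z) :
    ∃ a : A, ∀ b ∈ Badm z, ∀ T, 0 ≤ V f Badm hB ℓ T (f z a b) := by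
  classical
  have hsel : ∀ T : ℕ, ∃ a : A, ∀ b ∈ Badm z,
      0 ≤ min (ℓ z) (V f Badm hB ℓ T (f z a b)) := by
    intro T
    have := hz (T + 1)
    rw [V_succ, Finset.le_sup'_iff] at this
    obtain ⟨a, _, ha⟩ := this
    exact ⟨a, fun b hb => le_trans ha (Finset.inf'_le _ hb)⟩
  choose g hg using hsel
  obtain ⟨a, ha⟩ := Finite.exists_infinite_fiber g
  have ha' : (g ⁻¹' {a}).Infinite := Set.infinite_coe_iff.mp ha
  refine ⟨a, fun b hb T => ?_⟩
  obtain ⟨T', hT'mem, hTT'⟩ := ha'.exists_gt T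
  have hgT' : g T' = a := hT'mem
  have := hg T' b hb
  rw [hgT'] at this
  exact le_trans (le_min_iff.mp this).2 (V_anti f Badm hB ℓ (le_of_lt hTT') _)

end
/-- Over a finite state space, the infinite-horizon safe set
`{z | ∀ T, V_T(z) ≥ 0}` equals the maximal safe set Ω*. -/
theorem infinite_horizon_value_safe_set {Z A B : Type*}
    [Fintype Z] [Fintype A] [Nonempty A]
    (f : Z → A → B → Z) (Badm : Z → Finset B) (hB : ∀ z, (Badm z).Nonempty)
    (ℓ : Z → ℝ) :
    {z | ∀ T : ℕ, 0 ≤ V f Badm hB ℓ T z} = SafeSet f Badm {z | ℓ z < 0} := by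
  classical
  ext z0
  simp only [Set.mem_setOf_eq, SafeSet]
  constructor
  · intro hz0
    let π : Z → A := fun z =>
      if h : ∀ T, 0 ≤ V f Badm hB ℓ T z then
        (exists_good_action f Badm hB ℓ z h).choose
      else Classical.arbitrary A
    refine ⟨π, fun b hadm t => ?_⟩
    have inv : ∀ t, ∀ T, 0 ≤ V f Badm hB ℓ T (traj f π b z0 t) := by
      intro t
      induction t with
      | zero => exact hz0
      | succ t ih =>
        show ∀ T, 0 ≤ V f Badm hB ℓ T (f (traj f π b z0 t) (π (traj f π b z0 t)) (b t))
        have hπ : π (traj f π b z0 t) =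
            (exists_good_action f Badm hB ℓ (traj f π b z0 t) ih).choose := dif_pos ih
        rw [hπ]
        exact (exists_good_action f Badm hB ℓ (traj f π b z0 t) ih).choose_spec
          (b t) (hadm t)
    have h0 := inv t 0
    rw [V_zero] at h0
    simpa using not_lt.mpr h0
  · rintro ⟨π, hπ⟩ T
    refine safe_imp_V f Badm hB ℓ T z0 π fun b hadm t => ?_
    have := hπ b hadm t
    simpa [not_lt] using this
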